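/- Let G = (V, E) be a minimally k-hyperedge-connected (multi-)hypergraph with |V| ≥ 2, where k is a positive integer. Then there exists a vertex u ∈ V such that d_G(u) = k. -/
import Mathlib

/-- Cut function of a (multi-)hypergraph: the number of hyperedges (indexed by `E`)
crossing the vertex set `X`. -/
def hcut {V ι : Type*} [DecidableEq V] (E : Finset ι) (edge : ι → Finset V)
    (X : Finset V) : ℕ :=
  (E.filter fun i => (edge i ∩ X).Nonempty ∧ (edge i \ X).Nonempty).card

/-- A hypergraph is `k`-hyperedge-connected if every nonempty proper vertex subset
has cut value at least `k`. -/
def KEdgeConnected {V ι : Type*} [Fintype V] [DecidableEq V]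
    (E : Finset ι) (edge : ι → Finset V) (k : ℕ) : Prop :=
  ∀ X : Finset V, X.Nonempty → X ≠ Finset.univ → k ≤ hcut E edge X

section Aux

variable {V ι : Type*} [DecidableEq V]

/-- crossing predicate -/
def Crosses (e X : Finset V) : Prop := (e ∩ X).Nonempty ∧ (e \ X).Nonempty

instance (e X : Finset V) : Decidable (Crosses e X) := by
  unfold Crosses; infer_instance

lemma hcut_eq_sum (E : Finset ι) (edge : ι → Finset V) (X : Finset V) :
    hcut E edge X = ∑ i ∈ E, if Crosses (edge i) X then 1 else 0 := by
  rw [hcut, Finset.card_filter]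
  rfl

lemma crosses_of_both {e X Y : Finset V} (h1 : Crosses e (X \ Y))
    (h2 : Crosses e (Y \ X)) : Crosses e X ∧ Crosses e Y := by
  obtain ⟨a, ha⟩ := h1.1
  obtain ⟨b, hb⟩ := h2.1
  simp only [Finset.mem_inter, Finset.mem_sdiff] at ha hb
  exact ⟨⟨⟨a, by simp [ha.1, ha.2.1]⟩, ⟨b, by simp [hb.1, hb.2.2]⟩⟩,
         ⟨⟨b, by simp [hb.1, hb.2.1]⟩, ⟨a, by simp [ha.1, ha.2.2]⟩⟩⟩

lemma crosses_or {e X Y : Finset V} (h : Crosses e (X \ Y)) :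
    Crosses e X ∨ Crosses e Y := by
  obtain ⟨a, ha⟩ := h.1
  obtain ⟨c, hc⟩ := h.2
  simp only [Finset.mem_inter, Finset.mem_sdiff, not_and, not_not] at ha hc
  by_cases hcX : c ∈ X
  · right
    exact ⟨⟨c, by simp [hc.1, hc.2 hcX]⟩, ⟨a, by simp [ha.1, ha.2.2]⟩⟩
  · left
    exact ⟨⟨a, by simp [ha.1, ha.2.1]⟩, ⟨c, by simp [hc.1, hcX]⟩⟩

/-- posimodularity -/
lemma hcut_posimodular (E : Finset ι) (edge : ι → Finset V) (X Y : Finset V) :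
    hcut E edge (X \ Y) + hcut E edge (Y \ X) ≤ hcut E edge X + hcut E edge Y := by
  simp only [hcut_eq_sum, ← Finset.sum_add_distrib]
  apply Finset.sum_le_sum
  intro i _
  set e := edge i
  by_cases h1 : Crosses e (X \ Y) <;> by_cases h2 : Crosses e (Y \ X)
  · obtain ⟨hX, hY⟩ := crosses_of_both h1 h2
    simp [h1, h2, hX, hY]
  · rcases crosses_or h1 with hX | hY
    · simp [h1, h2, hX]
    · simp [h1, h2, hY]
  · rcases crosses_or h2 with hY | hX
    · simp [h1, h2, hY]
    · simp [h1, h2, hX]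
  · simp [h1, h2]

lemma hcut_erase [DecidableEq ι] (E : Finset ι) (edge : ι → Finset V)
    (X : Finset V) {i : ι} (hi : i ∈ E) :
    hcut E edge X = hcut (E.erase i) edge X + (if Crosses (edge i) X then 1 else 0) := by
  simp only [hcut_eq_sum]
  exact (Finset.sum_erase_add E _ hi).symm

end Aux

section Main

variable {V ι : Type*} [Fintype V] [DecidableEq V] [DecidableEq ι]

/-- every hyperedge crosses some tight set -/
lemma exists_tight (E : Finset ι) (edge : ι → Finset V) (k : ℕ)
    (hconn : KEdgeConnected E edge k)
    (hmin : ∀ i ∈ E, ¬ KEdgeConnected (E.erase i) edge k)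
    {i : ι} (hi : i ∈ E) :
    ∃ Y : Finset V, Y.Nonempty ∧ Y ≠ Finset.univ ∧ hcut E edge Y = k ∧
      Crosses (edge i) Y := by
  have h := hmin i hi
  rw [KEdgeConnected] at h
  push_neg at h
  obtain ⟨Y, hYne, hYuniv, hYlt⟩ := h
  have hle := hconn Y hYne hYuniv
  have heq := hcut_erase E edge Y hi
  by_cases hc : Crosses (edge i) Y
  · refine ⟨Y, hYne, hYuniv, ?_, hc⟩
    rw [if_pos hc] at heq; omega
  · exfalso; rw [if_neg hc, add_zero] at heq; omega

end Main

/-- A minimally `k`-hyperedge-connected hypergraph with at least two vertices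
has a vertex of degree exactly `k`. -/
theorem minimally_kEC_has_degree_k_vertex {V ι : Type*} [Fintype V] [DecidableEq V]
    [DecidableEq ι] (E : Finset ι) (edge : ι → Finset V) (k : ℕ) (hk : 0 < k)
    (hV : 2 ≤ Fintype.card V)
    (hconn : KEdgeConnected E edge k)
    (hmin : ∀ i ∈ E, ¬ KEdgeConnected (E.erase i) edge k) :
    ∃ u : V, hcut E edge {u} = k := by
  classical
  -- singletons are proper nonempty sets
  have hsingle : ∀ u : V, ({u} : Finset V) ≠ Finset.univ := by
    intro u h
    obtain ⟨v, hv⟩ := Fintype.exists_ne_of_one_lt_card (by omega) u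
    have : v ∈ ({u} : Finset V) := h ▸ Finset.mem_univ v
    simp at this
    exact hv this
  -- E is nonempty
  have hE : E.Nonempty := by
    by_contra h
    rw [Finset.not_nonempty_iff_eq_empty] at h
    obtain ⟨u⟩ := Fintype.card_pos_iff.mp (by omega : 0 < Fintype.card V)
    have := hconn {u} (Finset.singleton_nonempty u) (hsingle u)
    simp [hcut, h] at this
    omega
  obtain ⟨i₀, hi₀⟩ := hE
  -- the family of tight sets
  set T : Finset (Finset V) :=
    Finset.univ.filter (fun X => X.Nonempty ∧ X ≠ Finset.univ ∧ hcut E edge X = k) with hT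
  have hTne : T.Nonempty := by
    obtain ⟨Y, h1, h2, h3, _⟩ := exists_tight E edge k hconn hmin hi₀
    exact ⟨Y, by simp [hT, h1, h2, h3]⟩
  obtain ⟨X, hXT, hXmin⟩ := T.exists_min_image Finset.card hTne
  simp only [hT, Finset.mem_filter, Finset.mem_univ, true_and] at hXT
  obtain ⟨hXne, hXuniv, hXtight⟩ := hXT
  have hmincard : ∀ Z : Finset V, Z.Nonempty → Z ≠ Finset.univ → hcut E edge Z = k →
      X.card ≤ Z.card := by
    intro Z h1 h2 h3
    exact hXmin Z (by simp [hT, h1, h2, h3])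
  by_cases hedge : ∃ i ∈ E, (edge i).Nonempty ∧ edge i ⊆ X
  · -- a hyperedge inside X: contradiction with minimality of X
    exfalso
    obtain ⟨i, hiE, hine, hisub⟩ := hedge
    obtain ⟨Y, hYne, hYuniv, hYtight, hYc⟩ := exists_tight E edge k hconn hmin hiE
    obtain ⟨a, ha⟩ := hYc.1
    obtain ⟨b, hb⟩ := hYc.2
    simp only [Finset.mem_inter, Finset.mem_sdiff] at ha hb
    have haX : a ∈ X := hisub ha.1
    have hbX : b ∈ X := hisub hb.1
    -- X ∩ Y nonempty (a), X \ Y nonempty (b)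
    by_cases hYsub : Y ⊆ X
    · -- Y ⊊ X, contradicting minimality
      have hlt : Y ⊂ X := ⟨hYsub, fun h => hb.2 (h hbX)⟩
      have := hmincard Y hYne hYuniv hYtight
      have := Finset.card_lt_card hlt
      omega
    · obtain ⟨c, hcY, hcX⟩ := Finset.not_subset.mp hYsub
      have hXY : (X \ Y).Nonempty := ⟨b, Finset.mem_sdiff.mpr ⟨hbX, hb.2⟩⟩
      have hYX : (Y \ X).Nonempty := ⟨c, Finset.mem_sdiff.mpr ⟨hcY, hcX⟩⟩
      have hXYuniv : (X \ Y) ≠ Finset.univ := by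
        intro h
        have : a ∈ X \ Y := h ▸ Finset.mem_univ a
        exact (Finset.mem_sdiff.mp this).2 ha.2
      have hYXuniv : (Y \ X) ≠ Finset.univ := by
        intro h
        have : a ∈ Y \ X := h ▸ Finset.mem_univ a
        exact (Finset.mem_sdiff.mp this).2 haX
      have h1 := hconn _ hXY hXYuniv
      have h2 := hconn _ hYX hYXuniv
      have hpos := hcut_posimodular E edge X Y
      rw [hXtight, hYtight] at hpos
      -- X \ Y is tight and strictly smaller than X
      have htight : hcut E edge (X \ Y) = k := by omega
      have hlt : X \ Y ⊂ X :=
        ⟨Finset.sdiff_subset, fun h => (Finset.mem_sdiff.mp (h haX)).2 ha.2⟩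
      have := hmincard (X \ Y) hXY hXYuniv htight
      have := Finset.card_lt_card hlt
      omega
  · -- no hyperedge inside X: any u ∈ X has degree k
    push_neg at hedge
    obtain ⟨u, hu⟩ := hXne
    refine ⟨u, le_antisymm ?_ (hconn {u} (Finset.singleton_nonempty u) (hsingle u))⟩
    rw [← hXtight]
    apply Finset.card_le_card
    intro i hi
    simp only [Finset.mem_filter] at hi ⊢
    obtain ⟨hiE, ⟨⟨a, ha⟩, hne2⟩⟩ := hi
    simp only [Finset.mem_inter, Finset.mem_singleton] at ha
    have hue : u ∈ edge i := ha.2 ▸ ha.1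
    have hineX : ¬ edge i ⊆ X := fun h => hedge i hiE ⟨u, hue⟩ h
    obtain ⟨w, hw, hwX⟩ := Finset.not_subset.mp hineX
    exact ⟨hiE, ⟨u, Finset.mem_inter.mpr ⟨hue, hu⟩⟩, ⟨w, Finset.mem_sdiff.mpr ⟨hw, hwX⟩⟩⟩
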